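/- A transfinite rewrite sequence (t_β →_{p_β} t_{β+1})_{β<α} (satisfying the convergence conditions at all limit ordinals λ < α) is divergent if and only if there exists n ∈ ℕ such that the set of indices β < α with |p_β| = n is infinite. -/

import Mathlib

open Relation

/-- A signature: a type of function symbols together with an arity for each symbol. -/
structure Signature where
  Sym : Type
  ar : Sym → ℕ

/-- The polynomial functor whose final coalgebra is the set of (finite and infinite)
terms over the signature `Sg` and the set `X` of variables. -/
def TermF (Sg : Signature) (X : Type) : PFunctor.{0} :=
  ⟨X ⊕ Sg.Sym, fun a => Sum.rec (fun _ => Empty) (fun f => Fin (Sg.ar f)) a⟩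

/-- The set `T` of finite and infinite terms over `Sg` and `X`, defined coinductively
(as the final coalgebra, i.e. the M-type, of `TermF Sg X`). -/
def Tm (Sg : Signature) (X : Type) : Type := PFunctor.M (TermF Sg X)

variable {Sg : Signature} {X : Type}

/-- The term consisting of a single variable. -/
def Tm.var (x : X) : Tm Sg X := PFunctor.M.mk ⟨Sum.inl x, Empty.elim⟩

/-- The term `f(t₁,…,tₙ)` with root symbol `f` and arguments `args`. -/
def Tm.node (f : Sg.Sym) (args : Fin (Sg.ar f) → Tm Sg X) : Tm Sg X :=
  PFunctor.M.mk ⟨Sum.inr f, args⟩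

/-- One step of the corecursive definition of substitution:
`Sum.inl t` means `t` still has to be substituted, `Sum.inr t` means `t` is copied. -/
def substAux (σ : X → Tm Sg X) :
    (Tm Sg X ⊕ Tm Sg X) → (TermF Sg X) (Tm Sg X ⊕ Tm Sg X) := fun s =>
  match s with
  | Sum.inl t =>
    match PFunctor.M.dest t with
    | ⟨Sum.inl x, _⟩ =>
        ⟨(PFunctor.M.dest (σ x)).1, fun b => Sum.inr ((PFunctor.M.dest (σ x)).2 b)⟩
    | ⟨Sum.inr f, k⟩ => ⟨Sum.inr f, fun b => Sum.inl (k b)⟩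
  | Sum.inr t =>
      ⟨(PFunctor.M.dest t).1, fun b => Sum.inr ((PFunctor.M.dest t).2 b)⟩

/-- Application `tσ` of a substitution `σ : X → T` to a term `t`, defined corecursively. -/
def subst (σ : X → Tm Sg X) (t : Tm Sg X) : Tm Sg X :=
  PFunctor.M.corec (substAux σ) (Sum.inl t)

/-- `Occurs x t`: the variable `x` occurs in the term `t`. -/
inductive Occurs (x : X) : Tm Sg X → Prop
  | here {t : Tm Sg X} : t = Tm.var x → Occurs x t
  | deeper {t : Tm Sg X} {f : Sg.Sym} {args : Fin (Sg.ar f) → Tm Sg X}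
      (i : Fin (Sg.ar f)) : t = Tm.node f args → Occurs x (args i) → Occurs x t

/-- A term rewriting system over `Sg` and `X`: a set of rules `ℓ → r` such that
`ℓ` is not a variable and all variables of `r` occur in `ℓ`. -/
structure TRS (Sg : Signature) (X : Type) where
  rules : Set (Tm Sg X × Tm Sg X)
  lhs_not_var : ∀ l r, (l, r) ∈ rules → ∀ x : X, l ≠ Tm.var x
  vars_lhs : ∀ l r, (l, r) ∈ rules → ∀ x : X, Occurs x r → Occurs x l

/-- Relations on terms. -/
abbrev TRel (Sg : Signature) (X : Type) := Tm Sg X → Tm Sg X → Prop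

/-- The root step relation `→ε := {(ℓσ, rσ) | ℓ → r ∈ R, σ a substitution}`. -/
def RootStep (R : TRS Sg X) : TRel Sg X := fun s t =>
  ∃ l r, (l, r) ∈ R.rules ∧ ∃ σ : X → Tm Sg X, s = subst σ l ∧ t = subst σ r

/-- `StepAt Q p s t`: a `Q`-step at position `p`, i.e. `s = C[u]`, `t = C[v]` with
`(u,v) ∈ Q` and `C` a one-hole context whose hole is at position `p`. -/
inductive StepAt (Q : TRel Sg X) : List ℕ → Tm Sg X → Tm Sg X → Prop
  | here {s t : Tm Sg X} : Q s t → StepAt Q [] s t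
  | deeper {f : Sg.Sym} {ss ts : Fin (Sg.ar f) → Tm Sg X} (i : Fin (Sg.ar f))
      {p : List ℕ} : StepAt Q p (ss i) (ts i) → (∀ j, j ≠ i → ss j = ts j) →
      StepAt Q ((i : ℕ) :: p) (Tm.node f ss) (Tm.node f ts)

/-- The one-step rewrite relation `→` of a TRS: a root step applied inside a
one-hole context. -/
def Step (R : TRS Sg X) : TRel Sg X := fun s t => ∃ p, StepAt (RootStep R) p s t

/-- The lifting `↓R` of a relation `R`:
`↓R := {(f(s₁,…,sₙ), f(t₁,…,tₙ)) | f ∈ Σ, s₁ R t₁, …, sₙ R tₙ} ∪ Id`. -/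
def liftRel (R : TRel Sg X) : TRel Sg X := fun s t =>
  s = t ∨ ∃ (f : Sg.Sym) (ss ts : Fin (Sg.ar f) → Tm Sg X),
    s = Tm.node f ss ∧ t = Tm.node f ts ∧ ∀ i, R (ss i) (ts i)

lemma liftRel_mono : Monotone (liftRel (Sg := Sg) (X := X)) := by
  intro R S h s t hst
  rcases hst with h1 | ⟨f, ss, ts, rfl, rfl, hi⟩
  · exact Or.inl h1
  · exact Or.inr ⟨f, ss, ts, rfl, rfl, fun i => h _ _ (hi i)⟩

/-- Relational composition `r ∘ s`. -/
def relComp (r s : TRel Sg X) : TRel Sg X := fun a c => ∃ b, r a b ∧ s b c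

/-- The monotone operator `S ↦ (→ε ∪ ↓R)* ∘ ↓S` (for a fixed `R`). -/
def iredInnerHom (R : TRS Sg X) (U : TRel Sg X) : TRel Sg X →o TRel Sg X where
  toFun S := relComp
    (ReflTransGen (fun s t => RootStep R s t ∨ liftRel U s t)) (liftRel S)
  monotone' := by
    intro S S' h a c hac
    rcases hac with ⟨b, h1, h2⟩
    exact ⟨b, h1, liftRel_mono h _ _ h2⟩

/-- The monotone operator `R ↦ νS.((→ε ∪ ↓R)* ∘ ↓S)`. -/
def iredHom (R : TRS Sg X) : TRel Sg X →o TRel Sg X where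
  toFun U := OrderHom.gfp (iredInnerHom R U)
  monotone' := by
    intro U V h
    apply OrderHom.gfp.monotone
    intro S a c hac
    rcases hac with ⟨b, h1, h2⟩
    refine ⟨b, ?_, h2⟩
    refine Relation.ReflTransGen.mono ?_ _ _ h1
    intro x y hxy
    exact hxy.imp id (fun h' => liftRel_mono h _ _ h')

/-- The infinitary rewrite relation `→∞ := μR.νS.((→ε ∪ ↓R)* ∘ ↓S)`. -/
def ired (R : TRS Sg X) : TRel Sg X := OrderHom.lfp (iredHom R)

/-- The monotone operator `R' ↦ (→ε ∪ ↓R')*`. -/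
def biHom (R : TRS Sg X) : TRel Sg X →o TRel Sg X where
  toFun U := ReflTransGen (fun s t => RootStep R s t ∨ liftRel U s t)
  monotone' := by
    intro U V h a b hab
    refine Relation.ReflTransGen.mono ?_ _ _ hab
    intro x y hxy
    exact hxy.imp id (fun h' => liftRel_mono h _ _ h')

/-- The bi-infinite rewrite relation `∞→ := νR.(→ε ∪ ↓R)*`. -/
def bired (R : TRS Sg X) : TRel Sg X := OrderHom.gfp (biHom R)

/-- The monotone operator `R' ↦ (←ε ∪ →ε ∪ ↓R')*`. -/
def ieqHom (R : TRS Sg X) : TRel Sg X →o TRel Sg X where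
  toFun U := ReflTransGen (fun s t => RootStep R t s ∨ RootStep R s t ∨ liftRel U s t)
  monotone' := by
    intro U V h a b hab
    refine Relation.ReflTransGen.mono ?_ _ _ hab
    intro x y hxy
    exact hxy.imp id (fun h' => h'.imp id (fun h'' => liftRel_mono h _ _ h''))

/-- The infinitary equational reasoning relation `=∞ := νR.(←ε ∪ →ε ∪ ↓R)*`. -/
def ieq (R : TRS Sg X) : TRel Sg X := OrderHom.gfp (ieqHom R)

/-- `Agree n s t`: the terms `s` and `t` coincide up to depth `n`
(i.e. `d(s,t) ≤ 2^{-n}` for the standard metric `d`). -/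
def Agree : ℕ → Tm Sg X → Tm Sg X → Prop
  | 0, _, _ => True
  | n + 1, s, t =>
      (∃ x : X, s = Tm.var x ∧ t = Tm.var x) ∨
      ∃ (f : Sg.Sym) (ss ts : Fin (Sg.ar f) → Tm Sg X),
        s = Tm.node f ss ∧ t = Tm.node f ts ∧ ∀ i, Agree n (ss i) (ts i)

/-- `ConvTo t p l tl`: as `β` approaches the ordinal `l` from below,
`d(t β, tl)` tends to `0` and the depth `|p β|` tends to infinity. -/
def ConvTo (t : Ordinal.{0} → Tm Sg X) (p : Ordinal.{0} → List ℕ) (l : Ordinal.{0})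
    (tl : Tm Sg X) : Prop :=
  (∀ n : ℕ, ∃ β₀ < l, ∀ β, β₀ ≤ β → β < l → Agree n (t β) tl) ∧
  (∀ n : ℕ, ∃ β₀ < l, ∀ β, β₀ ≤ β → β < l → n ≤ (p β).length)

/-- A transfinite sequence of `Q`-steps `(t_β →_{p_β} t_{β+1})_{β<α}` of ordinal
length `α`, weakly continuous and with depths tending to infinity at every limit
ordinal `λ < α`. -/
structure TransSeq (Q : TRel Sg X) (α : Ordinal.{0}) where
  t : Ordinal.{0} → Tm Sg X
  pos : Ordinal.{0} → List ℕ
  step : ∀ β < α, StepAt Q (pos β) (t β) (t (β + 1))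
  conv : ∀ l < α, Order.IsSuccLimit l → ConvTo t pos l (t l)

/-- A transfinite rewrite sequence is strongly convergent if its length is a successor
ordinal (or zero), or there exists a final term to which it converges (with depths
tending to infinity) at the limit. -/
def TransSeq.StronglyConvergent {Q : TRel Sg X} {α : Ordinal.{0}} (s : TransSeq Q α) : Prop :=
  Order.IsSuccLimit α → ∃ tl, ConvTo s.t s.pos α tl

/-- `SCRed Q s t`: there is a strongly convergent transfinite sequence of `Q`-steps
from `s` to `t`. -/
def SCRed (Q : TRel Sg X) : TRel Sg X := fun a b =>
  ∃ (α : Ordinal.{0}) (s : TransSeq Q α), s.t 0 = a ∧ s.t α = b ∧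
    (Order.IsSuccLimit α → ConvTo s.t s.pos α b)

/-- The standard, ordinal-based infinitary rewrite relation `→∞_ord`:
strongly convergent transfinite rewrite sequences. -/
def iredOrd (R : TRS Sg X) : TRel Sg X := SCRed (RootStep R)

-- auxiliary facts about the term constructors
lemma node_ne_var (f : Sg.Sym) (args : Fin (Sg.ar f) → Tm Sg X) (x : X) :
    Tm.node f args ≠ Tm.var x := by
  intro h
  have h1 := congrArg (fun u => (PFunctor.M.dest u).1) h
  simp only [Tm.node, Tm.var, PFunctor.M.dest_mk] at h1
  exact Sum.inr_ne_inl h1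

lemma node_inj_sym {f g : Sg.Sym} {ss : Fin (Sg.ar f) → Tm Sg X}
    {ts : Fin (Sg.ar g) → Tm Sg X} (h : Tm.node f ss = Tm.node g ts) : f = g := by
  have h1 := congrArg (fun u => (PFunctor.M.dest u).1) h
  simp only [Tm.node, PFunctor.M.dest_mk] at h1
  exact Sum.inr.inj h1

lemma node_inj_args {f : Sg.Sym} {ss ts : Fin (Sg.ar f) → Tm Sg X}
    (h : Tm.node f ss = Tm.node f ts) : ss = ts := by
  have h' : (PFunctor.M.mk ⟨Sum.inr f, ss⟩ : Tm Sg X) = PFunctor.M.mk ⟨Sum.inr f, ts⟩ := h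
  have h1 := PFunctor.M.mk_inj h'
  injection h1 with h2 h3

lemma var_inj {x y : X} (h : (Tm.var x : Tm Sg X) = Tm.var y) : x = y := by
  have h1 := congrArg (fun u => (PFunctor.M.dest u).1) h
  simp only [Tm.var, PFunctor.M.dest_mk] at h1
  exact Sum.inl.inj h1

lemma occurs_var_iff {x y : X} : Occurs x (Tm.var y : Tm Sg X) ↔ x = y := by
  constructor
  · intro h
    cases h with
    | here h => exact (var_inj h.symm)
    | deeper i h _ => exact absurd h.symm (node_ne_var _ _ _)
  · rintro rfl
    exact Occurs.here rfl

lemma occurs_node_iff {x : X} {f : Sg.Sym} {args : Fin (Sg.ar f) → Tm Sg X} :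
    Occurs x (Tm.node f args) ↔ ∃ i, Occurs x (args i) := by
  constructor
  · intro h
    cases h with
    | here h => exact absurd h (node_ne_var _ _ _)
    | deeper i h hocc =>
      obtain rfl := node_inj_sym h
      obtain rfl := node_inj_args h
      exact ⟨i, hocc⟩
  · rintro ⟨i, h⟩
    exact Occurs.deeper i rfl h

section AuxLemmas

variable {Sg : Signature} {X : Type}

lemma tm_cases (t : Tm Sg X) :
    (∃ x : X, t = Tm.var x) ∨
      ∃ (f : Sg.Sym) (args : Fin (Sg.ar f) → Tm Sg X), t = Tm.node f args := by
  rcases h : PFunctor.M.dest t with ⟨a, k⟩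
  cases a with
  | inl x =>
    left
    refine ⟨x, ?_⟩
    rw [← PFunctor.M.mk_dest t, h]
    unfold Tm.var
    congr
    funext e
    exact e.elim
  | inr f =>
    right
    exact ⟨f, k, by rw [← PFunctor.M.mk_dest t, h]; rfl⟩

lemma eq_node_of_dest {t : Tm Sg X} {f : Sg.Sym} {args : Fin (Sg.ar f) → Tm Sg X}
    (h : PFunctor.M.dest t = ⟨Sum.inr f, args⟩) : t = Tm.node f args := by
  rw [← PFunctor.M.mk_dest t, h]; rfl

lemma eq_var_of_dest {t : Tm Sg X} {x : X}
    (h : (PFunctor.M.dest t).1 = Sum.inl x) : t = Tm.var x := by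
  rcases tm_cases t with ⟨y, rfl⟩ | ⟨f, args, rfl⟩
  · simp only [Tm.var, PFunctor.M.dest_mk] at h
    rw [Sum.inl.inj h]
  · simp only [Tm.node, PFunctor.M.dest_mk] at h
    exact absurd h Sum.inr_ne_inl

lemma agree_refl : ∀ (n : ℕ) (t : Tm Sg X), Agree n t t := by
  intro n
  induction n with
  | zero => intro t; trivial
  | succ n ih =>
    intro t
    rcases tm_cases t with ⟨x, rfl⟩ | ⟨f, args, rfl⟩
    · exact Or.inl ⟨x, rfl, rfl⟩
    · exact Or.inr ⟨f, args, args, rfl, rfl, fun i => ih _⟩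

lemma agree_symm : ∀ {n : ℕ} {s t : Tm Sg X}, Agree n s t → Agree n t s := by
  intro n
  induction n with
  | zero => intro s t _; trivial
  | succ n ih =>
    rintro s t (⟨x, rfl, rfl⟩ | ⟨f, ss, ts, rfl, rfl, hi⟩)
    · exact Or.inl ⟨x, rfl, rfl⟩
    · exact Or.inr ⟨f, ts, ss, rfl, rfl, fun i => ih (hi i)⟩

lemma agree_trans : ∀ {n : ℕ} {s t u : Tm Sg X}, Agree n s t → Agree n t u → Agree n s u := by
  intro n
  induction n with
  | zero => intro s t u _ _; trivial
  | succ n ih =>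
    rintro s t u (⟨x, rfl, rfl⟩ | ⟨f, ss, ts, rfl, rfl, hi⟩) h2
    · exact h2
    · rcases h2 with ⟨y, hy, rfl⟩ | ⟨g, ss', ts', h1', rfl, hi'⟩
      · exact absurd hy (node_ne_var _ _ _)
      · obtain rfl := node_inj_sym h1'
        obtain rfl := node_inj_args h1'
        exact Or.inr ⟨f, ss, ts', rfl, rfl, fun i => ih (hi i) (hi' i)⟩

lemma agree_mono : ∀ {n : ℕ} {s t : Tm Sg X}, Agree (n + 1) s t → Agree n s t := by
  intro n
  induction n with
  | zero => intro s t _; trivial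
  | succ n ih =>
    rintro s t (⟨x, rfl, rfl⟩ | ⟨f, ss, ts, rfl, rfl, hi⟩)
    · exact Or.inl ⟨x, rfl, rfl⟩
    · exact Or.inr ⟨f, ss, ts, rfl, rfl, fun i => ih (hi i)⟩

lemma agree_le {n m : ℕ} (h : n ≤ m) : ∀ {s t : Tm Sg X}, Agree m s t → Agree n s t := by
  obtain ⟨k, rfl⟩ := Nat.le.dest h
  clear h
  induction k with
  | zero => exact fun ha => ha
  | succ k ih => exact fun {s t} ha => ih (agree_mono ha)

lemma stepAt_agree {Q : TRel Sg X} {p : List ℕ} {s t : Tm Sg X}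
    (h : StepAt Q p s t) : ∀ n, n ≤ p.length → Agree n s t := by
  induction h with
  | here _ =>
    intro n hn
    simp only [List.length_nil, Nat.le_zero] at hn
    subst hn; trivial
  | @deeper f ss ts i p _ heq ih =>
    intro n hn
    cases n with
    | zero => trivial
    | succ m =>
      refine Or.inr ⟨f, ss, ts, rfl, rfl, fun j => ?_⟩
      by_cases hj : j = i
      · subst hj; exact ih m (by simpa using hn)
      · rw [heq j hj]; exact agree_refl m _

/-- The `i`-th immediate subterm of a term (or the term itself, out of range). -/
def childAt (t : Tm Sg X) (i : ℕ) : Tm Sg X :=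
  match PFunctor.M.dest t with
  | ⟨Sum.inl _, _⟩ => t
  | ⟨Sum.inr f, k⟩ => if h : i < Sg.ar f then k ⟨i, h⟩ else t

lemma dest_node (f : Sg.Sym) (args : Fin (Sg.ar f) → Tm Sg X) :
    PFunctor.M.dest (Tm.node f args) = ⟨Sum.inr f, args⟩ := by
  unfold Tm.node; exact PFunctor.M.dest_mk _

lemma dest_var (x : X) :
    PFunctor.M.dest (Tm.var x : Tm Sg X) = ⟨Sum.inl x, Empty.elim⟩ := by
  unfold Tm.var; exact PFunctor.M.dest_mk _

lemma childAt_node (f : Sg.Sym) (args : Fin (Sg.ar f) → Tm Sg X) (i : Fin (Sg.ar f)) :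
    childAt (Tm.node f args) (i : ℕ) = args i := by
  unfold childAt
  rw [dest_node]
  simp

/-- One step of the corecursive definition of the limit of a sequence of terms. -/
def tmLimF (u : ℕ → Tm Sg X) : (TermF Sg X) (ℕ → Tm Sg X) :=
  match PFunctor.M.dest (u 1) with
  | ⟨Sum.inl x, _⟩ => ⟨Sum.inl x, Empty.elim⟩
  | ⟨Sum.inr f, _⟩ => ⟨Sum.inr f, fun (b : Fin (Sg.ar f)) (m : ℕ) => childAt (u (m + 1)) (b : ℕ)⟩

/-- The limit of a (Cauchy) sequence of terms. -/
def tmLim (u : ℕ → Tm Sg X) : Tm Sg X := PFunctor.M.corec tmLimF u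

lemma dest_tmLim (u : ℕ → Tm Sg X) :
    PFunctor.M.dest (tmLim u) = ⟨(tmLimF u).1, fun b => tmLim ((tmLimF u).2 b)⟩ := by
  rw [tmLim, PFunctor.M.dest_corec]; rfl

lemma agree_tmLim : ∀ (n : ℕ) (u : ℕ → Tm Sg X),
    (∀ k m, k ≤ m → Agree k (u k) (u m)) → Agree n (u n) (tmLim u) := by
  intro n
  induction n with
  | zero => intro u _; trivial
  | succ n ih =>
    intro u hu
    rcases tm_cases (u 1) with ⟨x, hx⟩ | ⟨f, args, hf⟩
    · have hall : ∀ m : ℕ, u (m + 1) = Tm.var x := by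
        intro m
        rcases hu 1 (m + 1) (by omega) with ⟨y, hy1, hy2⟩ | ⟨g, ss, ts, h1, _, _⟩
        · obtain rfl := var_inj (hy1.symm.trans hx)
          exact hy2
        · exact absurd (h1.symm.trans hx) (node_ne_var _ _ _)
      have hF : tmLimF u = ⟨Sum.inl x, Empty.elim⟩ := by
        unfold tmLimF
        rw [hx, dest_var]
      have htmLim : tmLim u = Tm.var x := by
        rw [← PFunctor.M.mk_dest (tmLim u), dest_tmLim, hF]
        unfold Tm.var
        congr
        funext e
        exact e.elim
      rw [hall n, htmLim]
      exact Or.inl ⟨x, rfl, rfl⟩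
    · have hall : ∀ m : ℕ, ∃ ts, u (m + 1) = Tm.node f ts := by
        intro m
        rcases hu 1 (m + 1) (by omega) with ⟨y, hy1, _⟩ | ⟨g, ss, ts, h1, h2, _⟩
        · exact absurd (hf.symm.trans hy1) (node_ne_var _ _ _)
        · obtain rfl := node_inj_sym (h1.symm.trans hf)
          exact ⟨ts, h2⟩
      choose ts hts using hall
      have hF : tmLimF u =
          ⟨Sum.inr f, fun (b : Fin (Sg.ar f)) (m : ℕ) => childAt (u (m + 1)) (b : ℕ)⟩ := by
        unfold tmLimF
        rw [hf, dest_node]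
      have hchild : ∀ (b : Fin (Sg.ar f)) m, childAt (u (m + 1)) (b : ℕ) = ts m b := by
        intro b m
        rw [hts m, childAt_node]
      have htmLimu : tmLim u = Tm.node f (fun b => tmLim (fun m => ts m b)) := by
        apply eq_node_of_dest
        rw [dest_tmLim, hF]
        show Sigma.mk (Sum.inr f) _ = Sigma.mk (Sum.inr f) _
        congr 1
        funext b
        congr 1
        funext m
        exact hchild b m
      rw [hts n, htmLimu]
      refine Or.inr ⟨f, ts n, _, rfl, rfl, fun i => ?_⟩
      apply ih (fun m => ts m i)
      intro a c hac
      have h := hu (a + 1) (c + 1) (by omega)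
      rw [hts a, hts c] at h
      rcases h with ⟨y, hy, _⟩ | ⟨g, ss, tss, h1, h2, h3⟩
      · exact absurd hy (node_ne_var _ _ _)
      · obtain rfl := node_inj_sym h1
        obtain rfl := node_inj_args h1
        obtain rfl := node_inj_args h2
        exact h3 i

end AuxLemmas

/-- A transfinite rewrite sequence `(t_β →_{p_β} t_{β+1})_{β<α}`
(satisfying the convergence conditions at all limit ordinals `λ < α`) is divergent
if and only if for some `n ∈ ℕ` there are infinitely many steps at depth `n`. -/
theorem divergent_iff_infinitely_many_steps_at_some_depth (Sg : Signature) (X : Type)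
    [Infinite X] (R : TRS Sg X) (α : Ordinal.{0}) (seq : TransSeq (RootStep R) α) :
    ¬ seq.StronglyConvergent ↔
      ∃ n : ℕ, {β : Ordinal.{0} | β < α ∧ (seq.pos β).length = n}.Infinite := by
  constructor
  · -- divergent → some depth occurs infinitely often
    intro hdiv
    by_contra hfin'
    push_neg at hfin'
    apply hdiv
    intro hlimα
    have hfin : ∀ n : ℕ, {β : Ordinal.{0} | β < α ∧ (seq.pos β).length = n}.Finite :=
      fun n => hfin' n
    -- Step A: depths tend to infinity along the whole sequence
    have stepA : ∀ n : ℕ, ∃ β₀ < α, ∀ β, β₀ ≤ β → β < α → n ≤ (seq.pos β).length := by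
      intro n
      have hfin2 : {β : Ordinal.{0} | β < α ∧ (seq.pos β).length < n}.Finite := by
        refine Set.Finite.subset (Set.Finite.biUnion (Finset.range n).finite_toSet
          (fun m _ => hfin m)) ?_
        rintro β ⟨h1, h2⟩
        exact Set.mem_biUnion (Finset.mem_coe.mpr (Finset.mem_range.mpr h2)) ⟨h1, rfl⟩
      rcases Set.eq_empty_or_nonempty {β : Ordinal.{0} | β < α ∧ (seq.pos β).length < n}
        with he | hne
      · refine ⟨0, hlimα.pos, fun β _ hβα => ?_⟩
        by_contra h
        exact Set.eq_empty_iff_forall_notMem.mp he β ⟨hβα, by omega⟩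
      · have hmem := hne.csSup_mem hfin2
        set b := sSup {β : Ordinal.{0} | β < α ∧ (seq.pos β).length < n} with hb
        refine ⟨b + 1, ?_, ?_⟩
        · rw [Ordinal.add_one_eq_succ]
          exact hlimα.succ_lt hmem.1
        · intro β hβ0 hβα
          by_contra h
          have h1 : β ≤ b := le_csSup hfin2.bddAbove ⟨hβα, by omega⟩
          have h2 : b < b + 1 := by
            rw [Ordinal.add_one_eq_succ]; exact Order.lt_succ b
          exact absurd (hβ0.trans h1) (not_le.mpr h2)
    -- Step B: eventually all terms agree to depth n
    have stepB : ∀ n : ℕ, ∃ β₀ < α, ∀ γ, β₀ ≤ γ → γ < α →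
        ∀ γ', γ ≤ γ' → γ' < α → Agree n (seq.t γ) (seq.t γ') := by
      intro n
      obtain ⟨β₀, hβ₀α, hdep⟩ := stepA n
      refine ⟨β₀, hβ₀α, fun γ hβγ hγα => ?_⟩
      intro γ'
      induction γ' using Ordinal.induction with
      | _ γ' IH =>
        intro hγγ' hγ'α
        rcases eq_or_lt_of_le hγγ' with rfl | hlt
        · exact agree_refl n _
        · rcases Ordinal.zero_or_succ_or_isSuccLimit γ' with rfl | ⟨δ, rfl⟩ | hl
          · exact absurd hlt (not_lt_of_ge zero_le)
          · have hδγ' : δ < Order.succ δ := Order.lt_succ δ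
            have hδα : δ < α := lt_trans hδγ' hγ'α
            have hγδ : γ ≤ δ := Order.lt_succ_iff.mp hlt
            have h1 := IH δ hδγ' hγδ hδα
            have h2 : Agree n (seq.t δ) (seq.t (δ + 1)) :=
              stepAt_agree (seq.step δ hδα) n (hdep δ (hβγ.trans hγδ) hδα)
            rw [Ordinal.add_one_eq_succ] at h2
            exact agree_trans h1 h2
          · obtain ⟨β₁, hβ₁, hnear⟩ := (seq.conv γ' hγ'α hl).1 n
            have hβ₂ : max γ β₁ < γ' := max_lt hlt hβ₁
            have h1 := IH _ hβ₂ (le_max_left _ _) (lt_trans hβ₂ hγ'α)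
            have h2 := hnear _ (le_max_right _ _) hβ₂
            exact agree_trans h1 h2
    choose b hbα hbprop using stepB
    have hinv : ∀ k m, k ≤ m → Agree k (seq.t (b k)) (seq.t (b m)) := by
      intro k m hkm
      rcases le_total (b k) (b m) with h | h
      · exact hbprop k (b k) le_rfl (hbα k) (b m) h (hbα m)
      · exact agree_symm (agree_le hkm (hbprop m (b m) le_rfl (hbα m) (b k) h (hbα k)))
    refine ⟨tmLim (fun m => seq.t (b m)), ?_, fun n => stepA n⟩
    intro k
    refine ⟨b k, hbα k, fun β hbβ hβα => ?_⟩
    have h1 : Agree k (seq.t (b k)) (seq.t β) :=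
      hbprop k (b k) le_rfl (hbα k) β hbβ hβα
    have h2 : Agree k (seq.t (b k)) (tmLim (fun m => seq.t (b m))) :=
      agree_tmLim k _ hinv
    exact agree_trans (agree_symm h1) h2
  · -- infinitely many steps at some depth → divergent
    rintro ⟨n, hinf⟩ hSC
    set S : Set Ordinal.{0} := {β | β < α ∧ (seq.pos β).length = n} with hS
    set W : Set Ordinal.{0} := {l | (S ∩ Set.Iio l).Infinite} with hW
    have hαW : α ∈ W := by
      have : S ∩ Set.Iio α = S :=
        Set.inter_eq_self_of_subset_left (fun β hβ => hβ.1)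
      show (S ∩ Set.Iio α).Infinite
      rw [this]; exact hinf
    have hWne : W.Nonempty := ⟨α, hαW⟩
    set L0 := Ordinal.lt_wf.min W hWne with hL0
    have hL0W : L0 ∈ W := Ordinal.lt_wf.min_mem W hWne
    have hmin : ∀ l < L0, (S ∩ Set.Iio l).Finite := by
      intro l hl
      rcases Set.finite_or_infinite (S ∩ Set.Iio l) with hf | hif
      · exact hf
      · exact absurd hl (Ordinal.lt_wf.not_lt_min W hif)
    have hL0α : L0 ≤ α := Ordinal.lt_wf.min_le hαW
    have hL0lim : Order.IsSuccLimit L0 := by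
      rcases Ordinal.zero_or_succ_or_isSuccLimit L0 with h0 | ⟨δ, hδ⟩ | hl
      · exfalso
        have h1 : (S ∩ Set.Iio L0).Infinite := hL0W
        have h2 : S ∩ Set.Iio L0 = ∅ := by
          rw [h0]; ext x; simp
        rw [h2] at h1
        exact Set.not_infinite.mpr Set.finite_empty h1
      · exfalso
        have hdL : δ < L0 := by rw [← hδ]; exact Order.lt_succ δ
        have hfinδ := hmin δ hdL
        have hsub : S ∩ Set.Iio L0 ⊆ (S ∩ Set.Iio δ) ∪ {δ} := by
          rintro x ⟨hxS, hxL⟩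
          rw [← hδ] at hxL
          have hle : x ≤ δ := Order.lt_succ_iff.mp hxL
          rcases hle.lt_or_eq with h | h
          · exact Or.inl ⟨hxS, h⟩
          · exact Or.inr (by simp [h])
        have h1 : (S ∩ Set.Iio L0).Infinite := hL0W
        exact Set.not_infinite.mpr (hfinδ.union (Set.finite_singleton δ)) (h1.mono hsub)
      · exact hl
    have hcof : ∀ β < L0, ∃ s ∈ S, β ≤ s ∧ s < L0 := by
      intro β hβ
      by_contra h
      push_neg at h
      have hsub : S ∩ Set.Iio L0 ⊆ S ∩ Set.Iio β := by
        rintro x ⟨hxS, hxL⟩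
        refine ⟨hxS, ?_⟩
        by_contra hxβ
        exact absurd hxL (not_lt.mpr (h x hxS (not_lt.mp hxβ)))
      have h1 : (S ∩ Set.Iio L0).Infinite := hL0W
      exact Set.not_infinite.mpr (hmin β hβ) (h1.mono hsub)
    have key : ∀ tl, ConvTo seq.t seq.pos L0 tl → False := by
      intro tl hC
      obtain ⟨β₀, hβ₀, hdep⟩ := hC.2 (n + 1)
      obtain ⟨s, hsS, hs1, hs2⟩ := hcof β₀ hβ₀
      have := hdep s hs1 hs2
      have hlen : (seq.pos s).length = n := hsS.2
      omega
    rcases lt_or_eq_of_le hL0α with h | h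
    · exact key _ (seq.conv L0 h hL0lim)
    · obtain ⟨tl, hC⟩ := hSC (h ▸ hL0lim)
      exact key tl (by rw [h]; exact hC)
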